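/- The generating function B(x,y) = Σ_G x^{#H(G)} y^{#U(G)}, summed over all bargraphs G, where #H(G) and #U(G) denote the numbers of H and U steps of G, is a formal power series satisfying x·B² − (1 − x − y − xy)·B + xy = 0. -/

import Mathlib

/-- Steps of bargraphs / Motzkin paths. -/
inductive Step where
  | U : Step
  | H : Step
  | D : Step
deriving DecidableEq

/-- Vertical displacement of a step. -/
def Step.val : Step → ℤ
  | .U => 1
  | .H => 0
  | .D => -1

/-- Mirror of a step (swap U and D). -/
def Step.mirror : Step → Step
  | .U => .D
  | .H => .H
  | .D => .U

/-- Final height of a word. -/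
def hgt (w : List Step) : ℤ := (w.map Step.val).sum

/-- A Motzkin path prefix: never goes below the x-axis. -/
def IsMotzkinPrefix (w : List Step) : Prop := ∀ p : List Step, p <+: w → 0 ≤ hgt p

/-- A Motzkin path: never below the x-axis, ends at height 0. -/
def IsMotzkin (w : List Step) : Prop := IsMotzkinPrefix w ∧ hgt w = 0

/-- No peak `UD` and no valley `DU`. -/
def Cornerless (w : List Step) : Prop :=
  ¬ [Step.U, Step.D] <:+: w ∧ ¬ [Step.D, Step.U] <:+: w

/-- A bargraph: starts at the origin, ends on the x-axis, stays strictly above the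
x-axis except at the endpoints, and has no factor `UD` or `DU`. -/
def IsBargraph (w : List Step) : Prop :=
  2 ≤ w.length ∧ hgt w = 0 ∧
    (∀ p : List Step, p <+: w → p ≠ [] → p ≠ w → 0 < hgt p) ∧ Cornerless w

/-- Semiperimeter: number of `U` steps plus number of `H` steps. -/
def semi (w : List Step) : ℕ := w.count Step.U + w.count Step.H

/-- Length of the initial run of `U` steps. -/
def leadU : List Step → ℕ
  | Step.U :: rest => leadU rest + 1
  | _ => 0

/-- Length of the initial run of `H` steps. -/
def leadH : List Step → ℕ
  | Step.H :: rest => leadH rest + 1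
  | _ => 0

/-- Length of the initial run of `D` steps. -/
def leadD : List Step → ℕ
  | Step.D :: rest => leadD rest + 1
  | _ => 0

/-- Length of the first maximal run of `D` steps (0 if none). -/
def firstDescLen : List Step → ℕ
  | [] => 0
  | Step.D :: rest => leadD rest + 1
  | _ :: rest => firstDescLen rest

/-- Number of occurrences of the two-letter factor `a b`. -/
def cnt2 (a b : Step) : List Step → ℕ
  | x :: y :: rest => (if x = a ∧ y = b then 1 else 0) + cnt2 a b (y :: rest)
  | _ => 0

/-- Heights of the columns (`H` steps), starting from a given height. -/
def colHeights : ℤ → List Step → List ℤ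
  | _, [] => []
  | h, Step.U :: rest => colHeights (h + 1) rest
  | h, Step.H :: rest => h :: colHeights h rest
  | h, Step.D :: rest => colHeights (h - 1) rest

/-- Width of the leftmost maximal horizontal segment (0 if none). -/
def lhsW : List Step → ℕ
  | [] => 0
  | Step.H :: rest => leadH rest + 1
  | _ :: rest => lhsW rest

/-- Delete `h` steps at the start of the leftmost horizontal segment. -/
def stripLeadH (h : ℕ) : List Step → List Step
  | [] => []
  | Step.H :: rest => List.drop h (Step.H :: rest)
  | s :: rest => s :: stripLeadH h rest

/-- Number of initial columns of height 1: largest `j` such that the word begins `U H^j`. -/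
def iuc : List Step → ℕ
  | Step.U :: rest => leadH rest
  | _ => 0

/-- Number of maximal horizontal segments. -/
def hsCount : List Step → ℕ
  | [] => 0
  | [Step.H] => 1
  | [_] => 0
  | a :: b :: rest => (if a = Step.H ∧ b ≠ Step.H then 1 else 0) + hsCount (b :: rest)

/-- Mirror image: reverse the word and swap `U` with `D`. -/
def mir (w : List Step) : List Step := (w.reverse).map Step.mirror

/-- Shape of strictly alternating bargraphs:
`U^{i₁} H D^{k₁} H U^{i₂} H D^{k₂} H ⋯ U^{iₘ} H D^{kₘ}` with all `iᵣ, kᵣ ≥ 1`. -/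
inductive SAShape : List Step → Prop where
  | base (i k : ℕ) : 1 ≤ i → 1 ≤ k →
      SAShape (List.replicate i Step.U ++ [Step.H] ++ List.replicate k Step.D)
  | cons (i k : ℕ) (w : List Step) : 1 ≤ i → 1 ≤ k → SAShape w →
      SAShape (List.replicate i Step.U ++ [Step.H] ++ List.replicate k Step.D ++ [Step.H] ++ w)

/-- A strictly alternating bargraph. -/
def IsStrictAlt (w : List Step) : Prop := IsBargraph w ∧ SAShape w

/-- A secondary structure on `{0, …, m-1}`: all consecutive edges are present, every
vertex has at most one non-consecutive neighbour, and there are no crossing edges. -/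
def IsSecondaryStructure {m : ℕ} (G : SimpleGraph (Fin m)) : Prop :=
  (∀ i j : Fin m, (i : ℕ) + 1 = (j : ℕ) → G.Adj i j) ∧
  (∀ i j k : Fin m, G.Adj i j → G.Adj i k →
      (i : ℕ) + 1 ≠ (j : ℕ) → (j : ℕ) + 1 ≠ (i : ℕ) →
      (i : ℕ) + 1 ≠ (k : ℕ) → (k : ℕ) + 1 ≠ (i : ℕ) → j = k) ∧
  ¬ ∃ i j k l : Fin m, (i : ℕ) < (j : ℕ) ∧ (j : ℕ) < (k : ℕ) ∧ (k : ℕ) < (l : ℕ) ∧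
      G.Adj i k ∧ G.Adj j l

/-- Generating function of bargraphs: `x` (variable 0) marks `H` steps,
`y` (variable 1) marks `U` steps. -/
noncomputable def BG : MvPowerSeries (Fin 2) ℚ :=
  fun d => (Nat.card {w : List Step //
    IsBargraph w ∧ w.count Step.H = d 0 ∧ w.count Step.U = d 1} : ℚ)

/-- Generating function of cornerless Motzkin paths. -/
noncomputable def MG : MvPowerSeries (Fin 2) ℚ :=
  fun d => (Nat.card {w : List Step //
    IsMotzkin w ∧ Cornerless w ∧ w.count Step.H = d 0 ∧ w.count Step.U = d 1} : ℚ)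

/-- Generating function of bargraphs avoiding the factor `DH`. -/
noncomputable def BDH : MvPowerSeries (Fin 2) ℚ :=
  fun d => (Nat.card {w : List Step //
    IsBargraph w ∧ ¬ [Step.D, Step.H] <:+: w ∧
      w.count Step.H = d 0 ∧ w.count Step.U = d 1} : ℚ)

/-- Generating function of bargraphs avoiding the factors `DH` and `HH`. -/
noncomputable def BDHHH : MvPowerSeries (Fin 2) ℚ :=
  fun d => (Nat.card {w : List Step //
    IsBargraph w ∧ ¬ [Step.D, Step.H] <:+: w ∧ ¬ [Step.H, Step.H] <:+: w ∧
      w.count Step.H = d 0 ∧ w.count Step.U = d 1} : ℚ)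

/-- Generating function of cornerless Motzkin path prefixes ending at height `h`. -/
noncomputable def Pgf (h : ℕ) : MvPowerSeries (Fin 2) ℚ :=
  fun d => (Nat.card {w : List Step //
    IsMotzkinPrefix w ∧ Cornerless w ∧ hgt w = (h : ℤ) ∧
      w.count Step.H = d 0 ∧ w.count Step.U = d 1} : ℚ)

/-- Decomposition `G = U^a G₁ H G₂ D^a` of a strictly alternating bargraph. -/
def SADecomp (t : ℕ × List Step × List Step) (G : List Step) : Prop :=
  1 ≤ t.1 ∧ IsStrictAlt t.2.1 ∧ IsStrictAlt (Step.U :: (t.2.2 ++ [Step.D])) ∧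
    G = List.replicate t.1 Step.U ++ t.2.1 ++ [Step.H] ++ t.2.2 ++
      List.replicate t.1 Step.D

/-! ### Auxiliary development for the proof -/

namespace BGaux

open List

instance : Fintype Step :=
  ⟨⟨{Step.U, Step.H, Step.D}, by decide⟩, fun x => by cases x <;> simp⟩

@[simp] lemma hgt_nil : hgt ([] : List Step) = 0 := rfl

@[simp] lemma hgt_cons (a : Step) (w : List Step) : hgt (a :: w) = a.val + hgt w := by
  simp [hgt]

@[simp] lemma hgt_append (a b : List Step) : hgt (a ++ b) = hgt a + hgt b := by
  simp [hgt]

lemma length_eq_counts (w : List Step) :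
    w.length = w.count Step.U + w.count Step.H + w.count Step.D := by
  induction w with
  | nil => rfl
  | cons a t ih => cases a <;> simp [List.count_cons, ih] <;> omega

lemma hgt_eq_counts (w : List Step) :
    hgt w = (w.count Step.U : ℤ) - (w.count Step.D : ℤ) := by
  induction w with
  | nil => simp
  | cons a t ih => cases a <;> simp [List.count_cons, ih, Step.val] <;> ring

lemma cornerless_of_infix {u w : List Step} (h : u <:+: w) (hw : Cornerless w) :
    Cornerless u :=
  ⟨fun hc => hw.1 (hc.trans h), fun hc => hw.2 (hc.trans h)⟩

lemma cornerless_nil : Cornerless ([] : List Step) := by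
  constructor <;> intro h <;> simpa using h.length_le

lemma cornerless_singleton (a : Step) : Cornerless [a] := by
  constructor <;> intro h <;> simpa using h.length_le

/-- Where a 2-letter factor of an append can sit. -/
lemma infix_pair {p q : Step} {a b : List Step} (h : [p, q] <:+: a ++ b) :
    [p, q] <:+: a ∨ [p, q] <:+: b ∨ (a.getLast? = some p ∧ b.head? = some q) := by
  induction a with
  | nil => exact Or.inr (Or.inl (by simpa using h))
  | cons c a' ih =>
    rcases List.infix_cons_iff.mp h with hpre | hinf
    · rcases List.cons_prefix_cons.mp hpre with ⟨rfl, hq⟩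
      cases a' with
      | nil =>
        rcases hq with ⟨t, ht⟩
        refine Or.inr (Or.inr ⟨rfl, ?_⟩)
        have hb : b = q :: t := by simpa using ht.symm
        rw [hb]; rfl
      | cons d a'' =>
        rcases List.cons_prefix_cons.mp hq with ⟨rfl, -⟩
        exact Or.inl ⟨[], a'', rfl⟩
    · rcases ih hinf with h1 | h2 | ⟨h3, h4⟩
      · exact Or.inl (List.infix_cons h1)
      · exact Or.inr (Or.inl h2)
      · refine Or.inr (Or.inr ⟨?_, h4⟩)
        cases a' with
        | nil => simp at h3
        | cons d a'' => rw [List.getLast?_cons_cons]; exact h3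

lemma cornerless_append {a b : List Step} (ha : Cornerless a) (hb : Cornerless b)
    (hj : ∀ p q, a.getLast? = some p → b.head? = some q →
      ¬((p = Step.U ∧ q = Step.D) ∨ (p = Step.D ∧ q = Step.U))) :
    Cornerless (a ++ b) := by
  constructor
  · intro h
    rcases infix_pair h with h1 | h2 | ⟨h3, h4⟩
    · exact ha.1 h1
    · exact hb.1 h2
    · exact hj _ _ h3 h4 (Or.inl ⟨rfl, rfl⟩)
  · intro h
    rcases infix_pair h with h1 | h2 | ⟨h3, h4⟩
    · exact ha.2 h1
    · exact hb.2 h2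
    · exact hj _ _ h3 h4 (Or.inr ⟨rfl, rfl⟩)

lemma prefix_cons_iff' {p : List Step} {a : Step} {t : List Step} :
    p <+: a :: t ↔ p = [] ∨ ∃ q, p = a :: q ∧ q <+: t := by
  cases p with
  | nil => simp
  | cons x xs =>
    rw [List.cons_prefix_cons]
    constructor
    · rintro ⟨rfl, h⟩; exact Or.inr ⟨xs, rfl, h⟩
    · rintro (h | ⟨q, heq, h⟩)
      · cases h
      · cases heq; exact ⟨rfl, h⟩

lemma prefix_append_iff' {p a b : List Step} :
    p <+: a ++ b ↔ p <+: a ∨ ∃ q, p = a ++ q ∧ q <+: b := by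
  induction a generalizing p with
  | nil => simp only [List.nil_append]
           constructor
           · intro h; exact Or.inr ⟨p, rfl, h⟩
           · rintro (h | ⟨q, rfl, h⟩)
             · rw [List.prefix_nil.mp h]; exact List.nil_prefix
             · exact h
  | cons c a' ih =>
    rw [List.cons_append, prefix_cons_iff', prefix_cons_iff']
    constructor
    · rintro (rfl | ⟨q, rfl, hq⟩)
      · exact Or.inl (Or.inl rfl)
      · rcases ih.mp hq with h | ⟨r, rfl, hr⟩
        · exact Or.inl (Or.inr ⟨q, rfl, h⟩)
        · exact Or.inr ⟨r, rfl, hr⟩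
    · rintro ((rfl | ⟨q, rfl, hq⟩) | ⟨q, rfl, hq⟩)
      · exact Or.inl rfl
      · exact Or.inr ⟨q, rfl, ih.mpr (Or.inl hq)⟩
      · exact Or.inr ⟨a' ++ q, rfl, ih.mpr (Or.inr ⟨q, rfl, hq⟩)⟩

/-! ### Languages -/

/-- Cornerless Motzkin paths (the `U`-language). -/
def UL (w : List Step) : Prop := IsMotzkin w ∧ Cornerless w

/-- Cornerless Motzkin paths that are empty or start with `H` (the `S`-language). -/
def SL (w : List Step) : Prop := UL w ∧ ∀ x ∈ w.head?, x = Step.H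

/-- Concatenations of a bargraph and an `S`-word. -/
def BS (w : List Step) : Prop := ∃ b s, IsBargraph b ∧ SL s ∧ w = b ++ s

lemma bar_ne_nil {w : List Step} (hw : IsBargraph w) : w ≠ [] := by
  intro h; rw [h] at hw; exact absurd hw.1 (by simp)

lemma bar_head {w : List Step} (hw : IsBargraph w) : w.head? = some Step.U := by
  obtain ⟨a, t, rfl⟩ : ∃ a t, w = a :: t := by
    cases w with
    | nil => exact absurd hw.1 (by simp)
    | cons a t => exact ⟨a, t, rfl⟩
  have hlt : 0 < hgt [a] := by
    refine hw.2.2.1 [a] ⟨t, rfl⟩ (by simp) ?_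
    intro h
    have ht : t = [] := by simpa using h.symm
    subst ht
    simpa using hw.1
  cases a with
  | U => rfl
  | H => simp [Step.val] at hlt
  | D => simp [Step.val] at hlt

lemma bar_motzkin_prefix {w : List Step} (hw : IsBargraph w) : IsMotzkinPrefix w := by
  intro p hp
  by_cases hp0 : p = []
  · simp [hp0]
  by_cases hpw : p = w
  · rw [hpw, hw.2.1]
  · exact le_of_lt (hw.2.2.1 p hp hp0 hpw)

lemma getLast?_eq {w : List Step} (hw : w ≠ []) : ∃ a, w.getLast? = some a := by
  cases w with
  | nil => exact absurd rfl hw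
  | cons x t => exact ⟨(x :: t).getLast (by simp), List.getLast?_eq_getLast _⟩

lemma hgt_dropLast {w : List Step} {a : Step} (ha : w.getLast? = some a) :
    hgt w.dropLast = hgt w - a.val := by
  have h := List.dropLast_append_getLast? a ha
  have := hgt_append w.dropLast [a]
  rw [h] at this
  simp at this
  omega

lemma bar_last {w : List Step} (hw : IsBargraph w) : w.getLast? = some Step.D := by
  obtain ⟨a, ha⟩ := getLast?_eq (bar_ne_nil hw)
  have hd := hgt_dropLast ha
  rw [hw.2.1] at hd
  have hdl : 0 < hgt w.dropLast := by
    refine hw.2.2.1 _ (List.dropLast_prefix w) ?_ ?_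
    · intro h
      have h1 := congrArg List.length h
      have h2 := hw.1
      simp [List.length_dropLast] at h1
      omega
    · intro h
      have h1 := congrArg List.length h
      have h2 := hw.1
      simp [List.length_dropLast] at h1
      omega
  have : a.val < 0 := by omega
  cases a with
  | U => simp [Step.val] at this
  | H => simp [Step.val] at this
  | D => exact ha

lemma UL_last_ne_U {w : List Step} (h : UL w) {a : Step} (ha : w.getLast? = some a) :
    a ≠ Step.U := by
  have hd := hgt_dropLast ha
  rw [h.1.2] at hd
  have h0 : 0 ≤ hgt w.dropLast := h.1.1 _ (List.dropLast_prefix w)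
  intro hU
  rw [hU] at hd
  simp [Step.val] at hd
  omega

lemma bar_UL {w : List Step} (hw : IsBargraph w) : UL w :=
  ⟨⟨bar_motzkin_prefix hw, hw.2.1⟩, hw.2.2.2⟩

lemma BS_UL {w : List Step} (hw : BS w) : UL w := by
  obtain ⟨b, s, hb, hs, rfl⟩ := hw
  refine ⟨⟨?_, ?_⟩, ?_⟩
  · intro p hp
    rcases prefix_append_iff'.mp hp with h | ⟨q, rfl, hq⟩
    · exact bar_motzkin_prefix hb p h
    · rw [hgt_append, hb.2.1, zero_add]
      exact hs.1.1.1 q hq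
  · rw [hgt_append, hb.2.1, hs.1.1.2, zero_add]
  · refine cornerless_append hb.2.2.2 hs.1.2 ?_
    intro p q hp hq
    rw [bar_last hb] at hp
    injection hp with hp'
    subst hp'
    have hqH := hs.2 q hq
    subst hqH
    decide

lemma UL_nil : UL ([] : List Step) := by
  refine ⟨⟨fun p hp => ?_, rfl⟩, cornerless_nil⟩
  rw [List.prefix_nil.mp hp]; simp

lemma UL_cons_H {u : List Step} (hu : UL u) : UL (Step.H :: u) := by
  refine ⟨⟨fun p hp => ?_, by simp [Step.val, hu.1.2]⟩, ?_⟩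
  · rcases prefix_cons_iff'.mp hp with rfl | ⟨q, rfl, hq⟩
    · simp
    · simpa [Step.val] using hu.1.1 q hq
  · have : Step.H :: u = [Step.H] ++ u := rfl
    rw [this]
    refine cornerless_append (cornerless_singleton _) hu.2 ?_
    intro p q hp hq
    injection hp with hp'
    subst hp'
    rintro (⟨h1, -⟩ | ⟨h1, -⟩) <;> cases h1

lemma SL_cons_H {u : List Step} (hu : UL u) : SL (Step.H :: u) :=
  ⟨UL_cons_H hu, by intro x hx; injection hx with h; exact h.symm⟩

lemma UL_tail_H {t : List Step} (h : UL (Step.H :: t)) : UL t := by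
  refine ⟨⟨fun p hp => ?_, ?_⟩, cornerless_of_infix ⟨[Step.H], [], by simp⟩ h.2⟩
  · have := h.1.1 (Step.H :: p) (List.cons_prefix_cons.mpr ⟨rfl, hp⟩)
    simpa [Step.val] using this
  · have := h.1.2
    simpa [Step.val] using this

/-- First-return decomposition of a cornerless Motzkin path starting with `U`. -/
lemma UL_U_decomp {w : List Step} (h : UL w) (hh : w.head? = some Step.U) : BS w := by
  classical
  obtain ⟨t, rfl⟩ : ∃ t, w = Step.U :: t := by
    cases w with
    | nil => cases hh
    | cons a t =>
      injection hh with h'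
      exact ⟨t, by rw [h']⟩
  set w := Step.U :: t with hw
  have hne : w ≠ [] := by simp [hw]
  have hlp : 1 ≤ w.length := List.length_pos_iff.mpr hne
  have hex : ∃ k, 1 ≤ k ∧ hgt (w.take k) = 0 :=
    ⟨w.length, hlp, by rw [List.take_length]; exact h.1.2⟩
  obtain ⟨hn1, hn0⟩ := Nat.find_spec hex
  set n := Nat.find hex with hndef
  have hnle : n ≤ w.length :=
    Nat.find_min' hex ⟨hlp, by rw [List.take_length]; exact h.1.2⟩
  have hn2 : 2 ≤ n := by
    by_contra hc
    have hone : n = 1 := by omega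
    rw [hone] at hn0
    simp only [hw, List.take_succ_cons, List.take_zero] at hn0
    simp [Step.val] at hn0
  set b := w.take n with hbdef
  set s := w.drop n with hsdef
  have hblen : b.length = n := by rw [hbdef, List.length_take]; omega
  have hbs : w = b ++ s := (List.take_append_drop n w).symm
  clear_value b s
  have hbw : b <+: w := by rw [hbdef]; exact List.take_prefix n w
  have hbcor : Cornerless b := by rw [hbdef]; exact cornerless_of_infix (List.take_prefix n w).isInfix h.2
  have hscor : Cornerless s := by rw [hsdef]; exact cornerless_of_infix (List.drop_suffix n w).isInfix h.2
  have hbbar : IsBargraph b := by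
    refine ⟨by omega, hn0, ?_, hbcor⟩
    intro p hp hp0 hpb
    have hpw : p <+: w := hp.trans hbw
    have hge : 0 ≤ hgt p := h.1.1 p hpw
    have hple : p.length ≤ n := by have := hp.length_le; omega
    have hplt : p.length < n := by
      rcases lt_or_eq_of_le hple with h' | h'
      · exact h'
      · exact absurd (hp.eq_of_length (by omega)) hpb
    have hmin := Nat.find_min hex hplt
    rw [not_and] at hmin
    have hne0 : hgt (w.take p.length) ≠ 0 :=
      hmin (by have : p.length ≠ 0 := fun hc => hp0 (List.length_eq_zero_iff.mp hc); omega)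
    have hpt : p = w.take p.length := List.prefix_iff_eq_take.mp hpw
    rw [← hpt] at hne0
    omega
  have hsSL : SL s := by
    have hqpre : ∀ q : List Step, q <+: s → b ++ q <+: w := by
      intro q hq
      obtain ⟨r, hr⟩ := hq
      exact ⟨r, by rw [List.append_assoc, hr, ← hbs]⟩
    have hsUL : UL s := by
      refine ⟨⟨fun q hq => ?_, ?_⟩, hscor⟩
      · have := h.1.1 _ (hqpre q hq)
        rw [hgt_append, hn0, zero_add] at this
        exact this
      · have := h.1.2
        rw [hbs, hgt_append, hn0, zero_add] at this
        exact this
    refine ⟨hsUL, ?_⟩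
    intro x hx
    obtain ⟨s', rfl⟩ : ∃ s', s = x :: s' := by
      cases hs : s with
      | nil => rw [hs] at hx; cases hx
      | cons y s' =>
        rw [hs] at hx
        injection hx with h'
        exact ⟨s', by rw [h']⟩
    have hxD : x ≠ Step.D := by
      intro hc
      have := h.1.1 (b ++ [x]) (hqpre [x] ⟨s', rfl⟩)
      rw [hgt_append, hn0, zero_add, hc] at this
      simp [Step.val] at this
    have hxU : x ≠ Step.U := by
      intro hc
      apply h.2.2
      have hbl : b.dropLast ++ [Step.D] = b := List.dropLast_append_getLast? _ (bar_last hbbar)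
      refine ⟨b.dropLast, s', ?_⟩
      rw [hbs, ← hbl, hc]
      simp
    cases x with
    | U => exact absurd rfl hxU
    | H => rfl
    | D => exact absurd rfl hxD
  exact ⟨b, s, hbbar, hsSL, hbs⟩

lemma UL_cases {w : List Step} (h : UL w) :
    w = [] ∨ (∃ u, UL u ∧ w = Step.H :: u) ∨ BS w := by
  cases hw : w with
  | nil => exact Or.inl rfl
  | cons a t =>
    subst hw
    cases a with
    | U => exact Or.inr (Or.inr (UL_U_decomp h rfl))
    | H => exact Or.inr (Or.inl ⟨t, UL_tail_H h, rfl⟩)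
    | D =>
      have := h.1.1 [Step.D] ⟨t, rfl⟩
      simp [Step.val] at this

lemma BS_head {w : List Step} (hw : BS w) : w.head? = some Step.U := by
  obtain ⟨b, s, hb, hs, rfl⟩ := hw
  rw [List.head?_append, bar_head hb]
  rfl

lemma bar_factor_unique {b s b' s' : List Step} (hb : IsBargraph b) (hb' : IsBargraph b')
    (he : b ++ s = b' ++ s') : b = b' ∧ s = s' := by
  have h1 : b <+: b' ++ s' := he ▸ (⟨s, rfl⟩ : b <+: b ++ s)
  have h2 : b' <+: b' ++ s' := ⟨s', rfl⟩
  have key : ∀ c c' : List Step, IsBargraph c → IsBargraph c' → c <+: c' → c = c' := by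
    intro c c' hc hc' hp
    by_contra hne
    have := hc'.2.2.1 c hp (bar_ne_nil hc) hne
    rw [hc.2.1] at this
    exact lt_irrefl 0 this
  have hbb : b = b' := by
    rcases List.prefix_or_prefix_of_prefix h1 h2 with hp | hp
    · exact key _ _ hb hb' hp
    · exact (key _ _ hb' hb hp).symm
  subst hbb
  exact ⟨rfl, List.append_cancel_left he⟩

/-! ### Decomposition of bargraphs -/

lemma getLast?_cons_ne_nil {a : Step} {v : List Step} (h : v ≠ []) :
    (a :: v).getLast? = v.getLast? := by
  cases v with
  | nil => exact absurd rfl h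
  | cons b t => exact List.getLast?_cons_cons

lemma bar_UHD : IsBargraph [Step.U, Step.H, Step.D] := by
  refine ⟨by simp, by simp [Step.val], ?_, ?_, ?_⟩
  · intro p hp hp0 hpw
    rcases prefix_cons_iff'.mp hp with rfl | ⟨q, rfl, hq⟩
    · exact absurd rfl hp0
    rcases prefix_cons_iff'.mp hq with rfl | ⟨r, rfl, hr⟩
    · simp [Step.val]
    rcases prefix_cons_iff'.mp hr with rfl | ⟨r', rfl, hr'⟩
    · simp [Step.val]
    rw [List.prefix_nil.mp hr'] at hpw
    exact absurd rfl hpw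
  · decide
  · decide

lemma bar_cases {w : List Step} (h : IsBargraph w) :
    w = [Step.U, Step.H, Step.D] ∨ (∃ t, w = Step.U :: Step.H :: t ∧ t ≠ [Step.D]) ∨
      (∃ t, w = Step.U :: Step.U :: t) := by
  obtain ⟨t, rfl⟩ : ∃ t, w = Step.U :: t := by
    have := bar_head h
    cases w with
    | nil => cases this
    | cons a t => injection this with h'; exact ⟨t, by rw [h']⟩
  obtain ⟨c, t', rfl⟩ : ∃ c t', t = c :: t' := by
    cases t with
    | nil => have := h.2.1; simp [Step.val] at this
    | cons c t' => exact ⟨c, t', rfl⟩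
  cases c with
  | U => exact Or.inr (Or.inr ⟨t', rfl⟩)
  | H =>
    by_cases ht : t' = [Step.D]
    · subst ht; exact Or.inl rfl
    · exact Or.inr (Or.inl ⟨t', rfl, ht⟩)
  | D => exact absurd ⟨[], t', rfl⟩ h.2.2.2.1

lemma C2_down {t : List Step} (h : IsBargraph (Step.U :: Step.H :: t))
    (ht : t ≠ [Step.D]) : IsBargraph (Step.U :: t) := by
  have ht0 : t ≠ [] := by
    rintro rfl
    have := h.2.1
    simp [Step.val] at this
  refine ⟨?_, ?_, ?_, ?_, ?_⟩
  · have : t.length ≠ 0 := fun hc => ht0 (List.length_eq_zero_iff.mp hc)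
    simp; omega
  · have := h.2.1
    simpa [Step.val] using this
  · intro p hp hp0 hpw
    rcases prefix_cons_iff'.mp hp with rfl | ⟨q, rfl, hq⟩
    · exact absurd rfl hp0
    by_cases hqt : q = t
    · exact absurd (by rw [hqt]) hpw
    · have hpre : Step.U :: Step.H :: q <+: Step.U :: Step.H :: t :=
        List.cons_prefix_cons.mpr ⟨rfl, List.cons_prefix_cons.mpr ⟨rfl, hq⟩⟩
      have hne2 : Step.U :: Step.H :: q ≠ Step.U :: Step.H :: t := by
        intro hc
        apply hqt
        injection hc with _ hc'
        injection hc' with _ hc''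
      have := h.2.2.1 _ hpre (by simp) hne2
      simpa [Step.val] using this
  -- the two cornerless conditions
  · intro hin
    rcases infix_pair (a := [Step.U]) (b := t) hin with h1 | h2 | ⟨h3, h4⟩
    · simpa using h1.length_le
    · exact h.2.2.2.1 (h2.trans
        (show t <:+: Step.U :: Step.H :: t from ⟨[Step.U, Step.H], [], by simp⟩))
    · -- the [U,D] junction case : head? t = some D
      obtain ⟨t'', rfl⟩ : ∃ t'', t = Step.D :: t'' := by
        cases t with
        | nil => cases h4
        | cons c t'' =>
          injection h4 with h4'
          exact ⟨t'', by rw [h4']⟩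
      have ht'' : t'' ≠ [] := by rintro rfl; exact ht rfl
      have hpre : [Step.U, Step.H, Step.D] <+: Step.U :: Step.H :: Step.D :: t'' :=
        ⟨t'', rfl⟩
      have hne2 : [Step.U, Step.H, Step.D] ≠ Step.U :: Step.H :: Step.D :: t'' := by
        intro hc
        injection hc with _ hc'
        injection hc' with _ hc''
        injection hc'' with _ hc'''
        exact ht'' hc'''.symm
      have := h.2.2.1 _ hpre (by simp) hne2
      simp [Step.val] at this
  · intro hin
    rcases infix_pair (a := [Step.U]) (b := t) hin with h1 | h2 | ⟨h3, h4⟩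
    · simpa using h1.length_le
    · exact h.2.2.2.2 (h2.trans
        (show t <:+: Step.U :: Step.H :: t from ⟨[Step.U, Step.H], [], by simp⟩))
    · injection h3 with h3'
      exact Step.noConfusion h3'

lemma C2_up {t : List Step} (h : IsBargraph (Step.U :: t)) :
    IsBargraph (Step.U :: Step.H :: t) ∧ t ≠ [Step.D] := by
  have htD : t ≠ [Step.D] := by
    rintro rfl
    exact h.2.2.2.1 ⟨[], [], rfl⟩
  have ht0 : t ≠ [] := by
    rintro rfl
    have := h.2.1
    simp [Step.val] at this
  refine ⟨⟨by simp, ?_, ?_, ?_, ?_⟩, htD⟩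
  · have := h.2.1
    simpa [Step.val] using this
  · intro p hp hp0 hpw
    rcases prefix_cons_iff'.mp hp with rfl | ⟨q, rfl, hq⟩
    · exact absurd rfl hp0
    rcases prefix_cons_iff'.mp hq with rfl | ⟨r, rfl, hr⟩
    · simp [Step.val]
    by_cases hrt : r = t
    · exact absurd (by rw [hrt]) hpw
    · have := h.2.2.1 (Step.U :: r) (List.cons_prefix_cons.mpr ⟨rfl, hr⟩) (by simp)
        (by intro hc; injection hc with _ hc'; exact hrt hc')
      simpa [Step.val] using this
  · intro hin
    rcases infix_pair (a := [Step.U, Step.H]) (b := t) hin with h1 | h2 | ⟨h3, h4⟩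
    · revert h1; decide
    · exact h.2.2.2.1 (h2.trans
        (show t <:+: Step.U :: t from ⟨[Step.U], [], by simp⟩))
    · injection h3 with h3'
      exact Step.noConfusion h3'
  · intro hin
    rcases infix_pair (a := [Step.U, Step.H]) (b := t) hin with h1 | h2 | ⟨h3, h4⟩
    · revert h1; decide
    · exact h.2.2.2.2 (h2.trans
        (show t <:+: Step.U :: t from ⟨[Step.U], [], by simp⟩))
    · injection h3 with h3'
      exact Step.noConfusion h3'

lemma C3_down {t : List Step} (h : IsBargraph (Step.U :: Step.U :: t)) :
    ∃ v, BS v ∧ Step.U :: Step.U :: t = Step.U :: v ++ [Step.D] := by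
  set w := Step.U :: Step.U :: t with hw
  have hlast : w.getLast? = some Step.D := bar_last h
  have hUt : (Step.U :: t) ≠ [] := by simp
  have ht0 : t ≠ [] := by
    rintro rfl
    have : w.getLast? = some Step.U := rfl
    rw [hlast] at this
    injection this with h'
    exact Step.noConfusion h'
  set v := Step.U :: t.dropLast with hv
  have hdl : w.dropLast = Step.U :: v := by
    rw [hw, List.dropLast_cons_of_ne_nil hUt, List.dropLast_cons_of_ne_nil ht0]
  have hwv : w = Step.U :: v ++ [Step.D] := by
    have := List.dropLast_append_getLast? _ hlast
    rw [hdl] at this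
    rw [← this]
  have hvUL : UL v := by
    refine ⟨⟨?_, ?_⟩, ?_⟩
    · intro q hq
      have hpq : Step.U :: q <+: w := by
        rw [hwv]
        exact List.cons_prefix_cons.mpr ⟨rfl, hq.trans ⟨[Step.D], rfl⟩⟩
      have hlen : (Step.U :: q).length < w.length := by
        have h1 : q.length ≤ v.length := hq.length_le
        have h2 : w.length = v.length + 2 := by rw [hwv]; simp
        simp only [List.length_cons]
        omega
      have hne : Step.U :: q ≠ w := by
        intro hc
        rw [hc] at hlen
        exact lt_irrefl _ hlen
      have := h.2.2.1 (Step.U :: q) hpq (by simp) hne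
      simp only [hgt_cons, Step.val] at this
      omega
    · have h0 := h.2.1
      rw [hwv] at h0
      simp [Step.val] at h0
      omega
    · refine cornerless_of_infix ?_ h.2.2.2
      rw [hwv]
      exact ⟨[Step.U], [Step.D], by simp⟩
  exact ⟨v, UL_U_decomp hvUL rfl, hwv⟩

lemma C3_up {v : List Step} (hv : BS v) :
    IsBargraph (Step.U :: v ++ [Step.D]) ∧
      ∃ t, Step.U :: v ++ [Step.D] = Step.U :: Step.U :: t := by
  have hvUL : UL v := BS_UL hv
  have hvhead : v.head? = some Step.U := BS_head hv
  obtain ⟨v', rfl⟩ : ∃ v', v = Step.U :: v' := by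
    cases v with
    | nil => cases hvhead
    | cons a v' => injection hvhead with h'; exact ⟨v', by rw [h']⟩
  have hvne : (Step.U :: v') ≠ [] := by simp
  obtain ⟨a, ha⟩ := getLast?_eq hvne
  have haU : a ≠ Step.U := UL_last_ne_U hvUL ha
  constructor
  case right => exact ⟨v' ++ [Step.D], by simp⟩
  refine ⟨by simp, ?_, ?_, ?_⟩
  · simp only [hgt_cons, hgt_append, hgt_nil, Step.val, hvUL.1.2]
    simp [Step.val]
  · intro p hp hp0 hpw
    rcases prefix_cons_iff'.mp hp with rfl | ⟨q, rfl, hq⟩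
    · exact absurd rfl hp0
    rcases prefix_append_iff'.mp hq with hqv | ⟨r, rfl, hr⟩
    · have := hvUL.1.1 q hqv
      simp only [hgt_cons, Step.val]
      omega
    · rcases prefix_cons_iff'.mp hr with rfl | ⟨r', rfl, hr'⟩
      · simp only [hgt_cons, hgt_append, hgt_nil, Step.val, hvUL.1.2]
        simp [Step.val]
      · rw [List.prefix_nil.mp hr'] at hpw
        exact absurd rfl hpw
  · -- cornerless
    have hcorUv : Cornerless (Step.U :: Step.U :: v') := by
      have : Step.U :: Step.U :: v' = [Step.U] ++ (Step.U :: v') := rfl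
      rw [this]
      refine cornerless_append (cornerless_singleton _) hvUL.2 ?_
      intro p q hp hq
      injection hp with hp'
      injection hq with hq'
      subst hp'; subst hq'
      decide
    have hfin : Step.U :: (Step.U :: v') ++ [Step.D]
        = (Step.U :: Step.U :: v') ++ [Step.D] := rfl
    rw [hfin]
    refine cornerless_append hcorUv (cornerless_singleton _) ?_
    intro p q hp hq
    injection hq with hq'
    subst hq'
    have hp' : (Step.U :: v').getLast? = some p := by
      rwa [getLast?_cons_ne_nil hvne] at hp
    have hpa : p = a := by rw [hp'] at ha; injection ha
    subst hpa
    rintro (⟨h1, -⟩ | ⟨-, h2⟩)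
    · exact haU h1
    · exact Step.noConfusion h2

/-! ### Generating-function machinery -/

/-- Generating function of a language: `x` marks `H` steps, `y` marks `U` steps. -/
noncomputable def gf (P : List Step → Prop) : MvPowerSeries (Fin 2) ℚ :=
  fun d => (Nat.card {w : List Step //
    P w ∧ w.count Step.H = d 0 ∧ w.count Step.U = d 1} : ℚ)

lemma coeff_gf (P : List Step → Prop) (d : Fin 2 →₀ ℕ) :
    MvPowerSeries.coeff d (gf P) = (Nat.card {w : List Step //
      P w ∧ w.count Step.H = d 0 ∧ w.count Step.U = d 1} : ℚ) := rfl

/-- Pair of exponents as a finitely supported function on `Fin 2`. -/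
noncomputable def mk2 (a b : ℕ) : Fin 2 →₀ ℕ :=
  Finsupp.single 0 a + Finsupp.single 1 b

@[simp] lemma mk2_zero (a b : ℕ) : mk2 a b 0 = a := by
  simp [mk2, Finsupp.single_apply]

@[simp] lemma mk2_one (a b : ℕ) : mk2 a b 1 = b := by
  simp [mk2, Finsupp.single_apply]

lemma finsupp_ext2 {d e : Fin 2 →₀ ℕ} (h0 : d 0 = e 0) (h1 : d 1 = e 1) : d = e :=
  Finsupp.ext fun i => by fin_cases i <;> assumption

lemma slice_finite {P : List Step → Prop} {c : ℤ} (hP : ∀ w, P w → hgt w = c)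
    (a b : ℕ) :
    Finite {w : List Step // P w ∧ w.count Step.H = a ∧ w.count Step.U = b} := by
  have hb : ∀ w : {w : List Step // P w ∧ w.count Step.H = a ∧ w.count Step.U = b},
      (w : List Step).length ≤ a + 2 * b + c.natAbs := by
    rintro ⟨w, hw, hH, hU⟩
    have h1 := length_eq_counts w
    have h2 := hgt_eq_counts w
    rw [hP w hw] at h2
    simp only
    omega
  have hfin : {l : List Step | l.length ≤ a + 2 * b + c.natAbs}.Finite :=
    List.finite_length_le _ _
  have : Finite {l : List Step // l.length ≤ a + 2 * b + c.natAbs} := hfin.to_subtype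
  refine Finite.of_injective
    (fun w => (⟨w.1, hb w⟩ : {l : List Step // l.length ≤ a + 2 * b + c.natAbs})) ?_
  intro w w' h
  apply Subtype.ext
  exact Subtype.mk_eq_mk.mp h

lemma gf_congr {P Q : List Step → Prop} (F G : List Step → List Step)
    (hF : ∀ w, P w → Q (F w) ∧ (F w).count Step.H = w.count Step.H ∧
      (F w).count Step.U = w.count Step.U ∧ G (F w) = w)
    (hG : ∀ w, Q w → P (G w) ∧ F (G w) = w) :
    gf P = gf Q := by
  funext d
  show ((Nat.card _ : ℕ) : ℚ) = ((Nat.card _ : ℕ) : ℚ)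
  congr 1
  refine Nat.card_congr ⟨fun x => ⟨F x.1, (hF _ x.2.1).1,
      (hF _ x.2.1).2.1.trans x.2.2.1, (hF _ x.2.1).2.2.1.trans x.2.2.2⟩,
    fun y => ⟨G y.1, (hG _ y.2.1).1, ?_, ?_⟩, fun x => Subtype.ext (hF _ x.2.1).2.2.2,
    fun y => Subtype.ext (hG _ y.2.1).2⟩
  · have h1 := (hF _ (hG _ y.2.1).1).2.1
    rw [(hG _ y.2.1).2] at h1
    rw [← h1]
    exact y.2.2.1
  · have h1 := (hF _ (hG _ y.2.1).1).2.2.1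
    rw [(hG _ y.2.1).2] at h1
    rw [← h1]
    exact y.2.2.2

lemma gf_union {P Q : List Step → Prop} (hdisj : ∀ w, P w → Q w → False)
    (hfP : ∀ a b : ℕ, Finite {w : List Step // P w ∧ w.count Step.H = a ∧ w.count Step.U = b})
    (hfQ : ∀ a b : ℕ, Finite {w : List Step // Q w ∧ w.count Step.H = a ∧ w.count Step.U = b}) :
    gf (fun w => P w ∨ Q w) = gf P + gf Q := by
  classical
  funext d
  show ((Nat.card _ : ℕ) : ℚ) = ((Nat.card _ : ℕ) : ℚ) + ((Nat.card _ : ℕ) : ℚ)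
  rw [← Nat.cast_add]
  congr 1
  haveI := hfP (d 0) (d 1)
  haveI := hfQ (d 0) (d 1)
  rw [← Nat.card_sum]
  refine Nat.card_congr (Equiv.ofBijective
    (Sum.elim (fun x => ⟨x.1, Or.inl x.2.1, x.2.2⟩)
      (fun x => ⟨x.1, Or.inr x.2.1, x.2.2⟩) :
      _ → {w : List Step // (P w ∨ Q w) ∧ w.count Step.H = d 0 ∧ w.count Step.U = d 1})
    ⟨?_, ?_⟩).symm
  · rintro (x | x) (y | y) h <;> simp only [Sum.elim_inl, Sum.elim_inr] at h
    · exact congrArg Sum.inl (Subtype.ext (Subtype.mk_eq_mk.mp h))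
    · exact (hdisj x.1 x.2.1 (by
        rw [Subtype.mk_eq_mk.mp h]; exact y.2.1)).elim
    · exact (hdisj y.1 y.2.1 (by
        rw [(Subtype.mk_eq_mk.mp h).symm]; exact x.2.1)).elim
    · exact congrArg Sum.inr (Subtype.ext (Subtype.mk_eq_mk.mp h))
  · rintro ⟨w, hPQ | hPQ, hc⟩
    · exact ⟨Sum.inl ⟨w, hPQ, hc⟩, rfl⟩
    · exact ⟨Sum.inr ⟨w, hPQ, hc⟩, rfl⟩

lemma card_eq_val (u : List Step) (A : List Step → Prop) [Decidable (A u)] :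
    Nat.card {w : List Step // w = u ∧ A w} = if A u then 1 else 0 := by
  by_cases h : A u
  · rw [if_pos h]
    haveI : Unique {w : List Step // w = u ∧ A w} :=
      ⟨⟨⟨u, rfl, h⟩⟩, fun x => Subtype.ext x.2.1⟩
    exact Nat.card_unique
  · rw [if_neg h]
    haveI : IsEmpty {w : List Step // w = u ∧ A w} :=
      ⟨fun x => h (x.2.1 ▸ x.2.2)⟩
    exact Nat.card_of_isEmpty

lemma gf_nil_eq : gf (· = ([] : List Step)) = 1 := by
  classical
  ext d
  rw [coeff_gf, MvPowerSeries.coeff_one, card_eq_val]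
  by_cases h : d = 0
  · subst h; norm_num
  · rw [if_neg h, if_neg, Nat.cast_zero]
    intro hc
    exact h (finsupp_ext2 (by simp [← hc.1]) (by simp [← hc.2]))

lemma gf_H_eq : gf (· = [Step.H]) = MvPowerSeries.X (0 : Fin 2) := by
  classical
  ext d
  rw [coeff_gf, MvPowerSeries.coeff_X, card_eq_val]
  by_cases h : d = Finsupp.single (0 : Fin 2) 1
  · subst h
    rw [if_pos, if_pos rfl, Nat.cast_one]
    constructor <;> simp [List.count_cons, Finsupp.single_apply]
  · rw [if_neg h, if_neg, Nat.cast_zero]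
    intro hc
    refine h (finsupp_ext2 ?_ ?_)
    · rw [← hc.1]; simp [List.count_cons, Finsupp.single_apply]
    · rw [← hc.2]; simp [List.count_cons, Finsupp.single_apply]

lemma gf_U_eq : gf (· = [Step.U]) = MvPowerSeries.X (1 : Fin 2) := by
  classical
  ext d
  rw [coeff_gf, MvPowerSeries.coeff_X, card_eq_val]
  by_cases h : d = Finsupp.single (1 : Fin 2) 1
  · subst h
    rw [if_pos, if_pos rfl, Nat.cast_one]
    constructor <;> simp [List.count_cons, Finsupp.single_apply]
  · rw [if_neg h, if_neg, Nat.cast_zero]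
    intro hc
    refine h (finsupp_ext2 ?_ ?_)
    · rw [← hc.1]; simp [List.count_cons, Finsupp.single_apply]
    · rw [← hc.2]; simp [List.count_cons, Finsupp.single_apply]

lemma gf_mul {P Q : List Step → Prop}
    (huniq : ∀ b s b' s', P b → Q s → P b' → Q s' → b ++ s = b' ++ s' → b = b' ∧ s = s')
    (hfP : ∀ a b : ℕ, Finite {w : List Step // P w ∧ w.count Step.H = a ∧ w.count Step.U = b})
    (hfQ : ∀ a b : ℕ, Finite {w : List Step // Q w ∧ w.count Step.H = a ∧ w.count Step.U = b}) :
    gf P * gf Q = gf (fun w => ∃ b s, P b ∧ Q s ∧ w = b ++ s) := by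
  classical
  ext d
  rw [MvPowerSeries.coeff_mul, coeff_gf]
  have hcoeff : ∀ p : (Fin 2 →₀ ℕ) × (Fin 2 →₀ ℕ),
      MvPowerSeries.coeff p.1 (gf P) * MvPowerSeries.coeff p.2 (gf Q)
        = ((Nat.card {w : List Step // P w ∧ w.count Step.H = p.1 0 ∧
              w.count Step.U = p.1 1} *
            Nat.card {w : List Step // Q w ∧ w.count Step.H = p.2 0 ∧
              w.count Step.U = p.2 1} : ℕ) : ℚ) := by
    intro p
    rw [coeff_gf, coeff_gf, Nat.cast_mul]
  rw [Finset.sum_congr rfl fun p _ => hcoeff p, ← Nat.cast_sum]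
  congr 1
  haveI hfa : ∀ e : Fin 2 →₀ ℕ, Fintype {w : List Step // P w ∧
      w.count Step.H = e 0 ∧ w.count Step.U = e 1} := fun e =>
    @Fintype.ofFinite _ (hfP _ _)
  haveI hfb : ∀ e : Fin 2 →₀ ℕ, Fintype {w : List Step // Q w ∧
      w.count Step.H = e 0 ∧ w.count Step.U = e 1} := fun e =>
    @Fintype.ofFinite _ (hfQ _ _)
  have key : Nat.card (Σ p : (Finset.HasAntidiagonal.antidiagonal d : Finset ((Fin 2 →₀ ℕ) × (Fin 2 →₀ ℕ))),
        ({w : List Step // P w ∧ w.count Step.H = p.1.1 0 ∧ w.count Step.U = p.1.1 1} ×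
         {w : List Step // Q w ∧ w.count Step.H = p.1.2 0 ∧ w.count Step.U = p.1.2 1}))
      = Nat.card {w : List Step // (∃ b s, P b ∧ Q s ∧ w = b ++ s) ∧
          w.count Step.H = d 0 ∧ w.count Step.U = d 1} := by
    refine Nat.card_congr (Equiv.ofBijective (fun x =>
      ⟨x.2.1.1 ++ x.2.2.1, ⟨x.2.1.1, x.2.2.1, x.2.1.2.1, x.2.2.2.1, rfl⟩, ?_, ?_⟩) ⟨?_, ?_⟩)
    · rw [List.count_append, x.2.1.2.2.1, x.2.2.2.2.1, ← Finsupp.add_apply,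
        Finset.HasAntidiagonal.mem_antidiagonal.mp x.1.2]
    · rw [List.count_append, x.2.1.2.2.2, x.2.2.2.2.2, ← Finsupp.add_apply,
        Finset.HasAntidiagonal.mem_antidiagonal.mp x.1.2]
    · rintro ⟨⟨p, hp⟩, ⟨b, hbp⟩, ⟨s, hsp⟩⟩ ⟨⟨p', hp'⟩, ⟨b', hbp'⟩, ⟨s', hsp'⟩⟩ h
      have hw : b ++ s = b' ++ s' := Subtype.mk_eq_mk.mp h
      obtain ⟨hbb, hss⟩ := huniq b s b' s' hbp.1 hsp.1 hbp'.1 hsp'.1 hw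
      subst hbb
      subst hss
      have hp1 : p.1 = p'.1 := finsupp_ext2 (hbp.2.1.symm.trans hbp'.2.1)
        (hbp.2.2.symm.trans hbp'.2.2)
      have hpp : p = p' := by
        have h1 := Finset.HasAntidiagonal.mem_antidiagonal.mp hp
        have h2 := Finset.HasAntidiagonal.mem_antidiagonal.mp hp'
        refine Prod.ext hp1 ?_
        refine finsupp_ext2 ?_ ?_
        · have := congrArg (fun f => f 0) (h1.trans h2.symm)
          simp only [Finsupp.add_apply] at this
          rw [hp1] at this
          omega
        · have := congrArg (fun f => f 1) (h1.trans h2.symm)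
          simp only [Finsupp.add_apply] at this
          rw [hp1] at this
          omega
      subst hpp
      rfl
    · rintro ⟨w, ⟨b, s, hb, hs, rfl⟩, hH, hU⟩
      refine ⟨⟨⟨(mk2 (b.count Step.H) (b.count Step.U),
        mk2 (s.count Step.H) (s.count Step.U)), ?_⟩,
        ⟨b, hb, by simp, by simp⟩, ⟨s, hs, by simp, by simp⟩⟩, ?_⟩
      · refine Finset.HasAntidiagonal.mem_antidiagonal.mpr (finsupp_ext2 ?_ ?_)
        · rw [Finsupp.add_apply, mk2_zero, mk2_zero, ← hH, List.count_append]
        · rw [Finsupp.add_apply, mk2_one, mk2_one, ← hU, List.count_append]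
      · exact Subtype.ext rfl
  rw [← key, Nat.card_eq_fintype_card, Fintype.card_sigma,
    ← Finset.sum_coe_sort (Finset.HasAntidiagonal.antidiagonal d)]
  refine Finset.sum_congr rfl ?_
  intro p _
  rw [Fintype.card_prod, Nat.card_eq_fintype_card, Nat.card_eq_fintype_card]

/-! ### The three grammar identities -/

lemma gf_ext {P Q : List Step → Prop} (h : ∀ w, P w ↔ Q w) : gf P = gf Q := by
  have : P = Q := funext fun w => propext (h w)
  rw [this]

lemma SL_empty : SL ([] : List Step) := ⟨UL_nil, fun x hx => by cases hx⟩

lemma SL_iff (w : List Step) :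
    SL w ↔ (w = [] ∨ ∃ u, UL u ∧ w = Step.H :: u) := by
  constructor
  · intro hs
    cases w with
    | nil => exact Or.inl rfl
    | cons a t =>
      have ha : a = Step.H := hs.2 a rfl
      subst ha
      exact Or.inr ⟨t, UL_tail_H hs.1, rfl⟩
  · rintro (rfl | ⟨u, hu, rfl⟩)
    · exact SL_empty
    · exact SL_cons_H hu

lemma UL_iff (w : List Step) :
    UL w ↔ ((w = [] ∨ ∃ u, UL u ∧ w = Step.H :: u) ∨ BS w) := by
  constructor
  · intro h
    rcases UL_cases h with h1 | h2 | h3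
    · exact Or.inl (Or.inl h1)
    · exact Or.inl (Or.inr h2)
    · exact Or.inr h3
  · rintro ((rfl | ⟨u, hu, rfl⟩) | hbs)
    · exact UL_nil
    · exact UL_cons_H hu
    · exact BS_UL hbs

lemma Bar_iff (w : List Step) :
    IsBargraph w ↔ (w = [Step.U, Step.H, Step.D] ∨
      ((IsBargraph w ∧ ∃ t, w = Step.U :: Step.H :: t ∧ t ≠ [Step.D]) ∨
       (IsBargraph w ∧ ∃ t, w = Step.U :: Step.U :: t))) := by
  constructor
  · intro h
    rcases bar_cases h with h1 | h2 | h3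
    · exact Or.inl h1
    · exact Or.inr (Or.inl ⟨h, h2⟩)
    · exact Or.inr (Or.inr ⟨h, h3⟩)
  · rintro (rfl | ⟨h, -⟩ | ⟨h, -⟩)
    · exact bar_UHD
    · exact h
    · exact h

lemma uniq_single (u : List Step) (Q : List Step → Prop) :
    ∀ b s b' s', b = u → Q s → b' = u → Q s' → b ++ s = b' ++ s' → b = b' ∧ s = s' := by
  rintro b s b' s' rfl - rfl - he
  exact ⟨rfl, List.append_cancel_left he⟩

lemma bar_uniq :
    ∀ b s b' s', IsBargraph b → SL s → IsBargraph b' → SL s' → b ++ s = b' ++ s' →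
      b = b' ∧ s = s' :=
  fun _ _ _ _ hb _ hb' _ he => bar_factor_unique hb hb' he

-- Finiteness of slices
lemma finBar : ∀ a b : ℕ, Finite {w : List Step //
    IsBargraph w ∧ w.count Step.H = a ∧ w.count Step.U = b} :=
  slice_finite (c := 0) fun w hw => hw.2.1

lemma finSL : ∀ a b : ℕ, Finite {w : List Step //
    SL w ∧ w.count Step.H = a ∧ w.count Step.U = b} :=
  slice_finite (c := 0) fun w hw => hw.1.1.2

lemma finUL : ∀ a b : ℕ, Finite {w : List Step //
    UL w ∧ w.count Step.H = a ∧ w.count Step.U = b} :=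
  slice_finite (c := 0) fun w hw => hw.1.2

lemma finBS : ∀ a b : ℕ, Finite {w : List Step //
    BS w ∧ w.count Step.H = a ∧ w.count Step.U = b} :=
  slice_finite (c := 0) fun w hw => (BS_UL hw).1.2

lemma finNil : ∀ a b : ℕ, Finite {w : List Step //
    w = [] ∧ w.count Step.H = a ∧ w.count Step.U = b} :=
  slice_finite (c := 0) fun w hw => by rw [hw]; rfl

lemma finSingH : ∀ a b : ℕ, Finite {w : List Step //
    w = [Step.H] ∧ w.count Step.H = a ∧ w.count Step.U = b} :=
  slice_finite (c := 0) fun w hw => by rw [hw]; decide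

lemma finSingU : ∀ a b : ℕ, Finite {w : List Step //
    w = [Step.U] ∧ w.count Step.H = a ∧ w.count Step.U = b} :=
  slice_finite (c := 1) fun w hw => by rw [hw]; decide

lemma finHUL : ∀ a b : ℕ, Finite {w : List Step //
    (∃ u, UL u ∧ w = Step.H :: u) ∧ w.count Step.H = a ∧ w.count Step.U = b} :=
  slice_finite (c := 0) fun w hw => by
    obtain ⟨u, hu, rfl⟩ := hw
    simp [Step.val, hu.1.2]

/-- Identity (B): `S = 1 + x·U`. -/
lemma gf_SL_eq : gf SL = 1 + MvPowerSeries.X (0 : Fin 2) * gf UL := by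
  have h1 : gf SL = gf (fun w => w = [] ∨ ∃ u, UL u ∧ w = Step.H :: u) := gf_ext SL_iff
  have h2 : gf (fun w => ∃ u, UL u ∧ w = Step.H :: u)
      = gf (fun w => ∃ b s, b = [Step.H] ∧ UL s ∧ w = b ++ s) := by
    refine gf_ext fun w => ⟨?_, ?_⟩
    · rintro ⟨u, hu, rfl⟩; exact ⟨[Step.H], u, rfl, hu, rfl⟩
    · rintro ⟨b, s, rfl, hs, rfl⟩; exact ⟨s, hs, rfl⟩
  have h3 := gf_mul (uniq_single [Step.H] UL) finSingH finUL
  rw [h1, gf_union (by rintro w rfl ⟨u, hu, h⟩; cases h) finNil finHUL,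
    gf_nil_eq, h2, ← h3, gf_H_eq]

/-- Identity (C): `U = 1 + x·U + B·S`. -/
lemma gf_UL_eq : gf UL = 1 + MvPowerSeries.X (0 : Fin 2) * gf UL
    + gf IsBargraph * gf SL := by
  have h1 : gf UL
      = gf (fun w => (w = [] ∨ ∃ u, UL u ∧ w = Step.H :: u) ∨ BS w) := gf_ext UL_iff
  have hdisj1 : ∀ w, (w = [] ∨ ∃ u, UL u ∧ w = Step.H :: u) → BS w → False := by
    rintro w (rfl | ⟨u, hu, rfl⟩) hbs <;> have hh := BS_head hbs
    · cases hh
    · injection hh with hh'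
      exact Step.noConfusion hh'
  have hfin1 : ∀ a b : ℕ, Finite {w : List Step //
      (w = [] ∨ ∃ u, UL u ∧ w = Step.H :: u) ∧ w.count Step.H = a ∧ w.count Step.U = b} := by
    refine slice_finite (c := 0) fun w hw => ?_
    rcases hw with rfl | ⟨u, hu, rfl⟩
    · rfl
    · simp [Step.val, hu.1.2]
  have h2 : gf (fun w => ∃ u, UL u ∧ w = Step.H :: u)
      = gf (fun w => ∃ b s, b = [Step.H] ∧ UL s ∧ w = b ++ s) := by
    refine gf_ext fun w => ⟨?_, ?_⟩
    · rintro ⟨u, hu, rfl⟩; exact ⟨[Step.H], u, rfl, hu, rfl⟩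
    · rintro ⟨b, s, rfl, hs, rfl⟩; exact ⟨s, hs, rfl⟩
  have h3 : gf BS = gf (fun w => ∃ b s, IsBargraph b ∧ SL s ∧ w = b ++ s) :=
    gf_ext fun w => Iff.rfl
  refine h1.trans ?_
  rw [gf_union hdisj1 hfin1 finBS,
    gf_union (by rintro w rfl ⟨u, hu, h⟩; cases h) finNil finHUL,
    gf_nil_eq, h2, ← gf_mul (uniq_single [Step.H] UL) finSingH finUL, gf_H_eq,
    h3, ← gf_mul bar_uniq finBar finSL]

/-- Identity (A): `B = xy + x·B + y·B·S`. -/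
lemma gf_Bar_eq : gf IsBargraph
    = MvPowerSeries.X (0 : Fin 2) * MvPowerSeries.X (1 : Fin 2)
      + MvPowerSeries.X (0 : Fin 2) * gf IsBargraph
      + MvPowerSeries.X (1 : Fin 2) * (gf IsBargraph * gf SL) := by
  classical
  -- the three classes
  set P1 : List Step → Prop := fun w => w = [Step.U, Step.H, Step.D] with hP1
  set P2 : List Step → Prop :=
    fun w => IsBargraph w ∧ ∃ t, w = Step.U :: Step.H :: t ∧ t ≠ [Step.D] with hP2
  set P3 : List Step → Prop :=
    fun w => IsBargraph w ∧ ∃ t, w = Step.U :: Step.U :: t with hP3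
  have finP1 : ∀ a b : ℕ, Finite {w : List Step //
      P1 w ∧ w.count Step.H = a ∧ w.count Step.U = b} :=
    slice_finite (c := 0) fun w hw => by rw [hw]; decide
  have finP2 : ∀ a b : ℕ, Finite {w : List Step //
      P2 w ∧ w.count Step.H = a ∧ w.count Step.U = b} :=
    slice_finite (c := 0) fun w hw => hw.1.2.1
  have finP3 : ∀ a b : ℕ, Finite {w : List Step //
      P3 w ∧ w.count Step.H = a ∧ w.count Step.U = b} :=
    slice_finite (c := 0) fun w hw => hw.1.2.1
  have finP23 : ∀ a b : ℕ, Finite {w : List Step //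
      (P2 w ∨ P3 w) ∧ w.count Step.H = a ∧ w.count Step.U = b} :=
    slice_finite (c := 0) fun w hw => by rcases hw with h | h <;> exact h.1.2.1
  -- piece 1 : gf P1 = x y
  have g1 : gf P1 = MvPowerSeries.X (0 : Fin 2) * MvPowerSeries.X (1 : Fin 2) := by
    have e1 : gf P1 = gf (fun w => w = [Step.H, Step.U]) := by
      refine gf_congr (fun _ => [Step.H, Step.U]) (fun _ => [Step.U, Step.H, Step.D]) ?_ ?_
      · rintro w rfl; exact ⟨rfl, by decide, by decide, rfl⟩
      · rintro w rfl; exact ⟨rfl, rfl⟩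
    have e2 : gf (fun w => w = [Step.H, Step.U])
        = gf (fun w => ∃ b s, b = [Step.H] ∧ s = [Step.U] ∧ w = b ++ s) := by
      refine gf_ext fun w => ⟨?_, ?_⟩
      · rintro rfl; exact ⟨[Step.H], [Step.U], rfl, rfl, rfl⟩
      · rintro ⟨b, s, rfl, rfl, rfl⟩; rfl
    rw [e1, e2, ← gf_mul (uniq_single [Step.H] (· = [Step.U])) finSingH finSingU,
      gf_H_eq, gf_U_eq]
  -- piece 2 : gf P2 = x B
  have g2 : gf P2 = MvPowerSeries.X (0 : Fin 2) * gf IsBargraph := by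
    have e1 : gf P2 = gf (fun w => ∃ b s, b = [Step.H] ∧ IsBargraph s ∧ w = b ++ s) := by
      refine gf_congr (fun w => Step.H :: Step.U :: w.tail.tail)
        (fun w => Step.U :: Step.H :: w.tail.tail) ?_ ?_
      · rintro w ⟨hbar, t, rfl, ht⟩
        exact ⟨⟨[Step.H], Step.U :: t, rfl, C2_down hbar ht, rfl⟩,
          by simp [List.count_cons], by simp [List.count_cons], rfl⟩
      · rintro w ⟨b, s, rfl, hbar, rfl⟩
        obtain ⟨t, rfl⟩ : ∃ t, s = Step.U :: t := by
          have := bar_head hbar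
          cases s with
          | nil => cases this
          | cons a t => injection this with h'; exact ⟨t, by rw [h']⟩
        exact ⟨⟨(C2_up hbar).1, t, rfl, (C2_up hbar).2⟩, rfl⟩
    rw [e1, ← gf_mul (uniq_single [Step.H] IsBargraph) finSingH finBar, gf_H_eq]
  -- piece 3 : gf P3 = y (B S)
  have g3 : gf P3 = MvPowerSeries.X (1 : Fin 2) * (gf IsBargraph * gf SL) := by
    have e1 : gf P3 = gf (fun w => ∃ b s, b = [Step.U] ∧ BS s ∧ w = b ++ s) := by
      refine gf_congr List.dropLast (fun w => w ++ [Step.D]) ?_ ?_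
      · rintro w ⟨hbar, t, rfl⟩
        obtain ⟨v, hv, hwv⟩ := C3_down hbar
        have hF1 : (Step.U :: Step.U :: t).dropLast = Step.U :: v := by
          rw [hwv]; exact List.dropLast_concat
        refine ⟨⟨[Step.U], v, rfl, hv, by rw [hF1]; rfl⟩, ?_, ?_, ?_⟩
        · rw [hF1, hwv]; simp [List.count_cons, List.count_append]
        · rw [hF1, hwv]; simp [List.count_cons, List.count_append]
        · rw [hF1, hwv]
      · rintro w ⟨b, v, rfl, hv, rfl⟩
        refine ⟨⟨(C3_up hv).1, (C3_up hv).2⟩, List.dropLast_concat⟩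
    have e2 : gf BS = gf (fun w => ∃ b s, IsBargraph b ∧ SL s ∧ w = b ++ s) :=
      gf_ext fun w => Iff.rfl
    rw [e1, ← gf_mul (uniq_single [Step.U] BS) finSingU finBS, gf_U_eq, e2,
      ← gf_mul bar_uniq finBar finSL]
  -- assembly
  have hsplit : gf IsBargraph = gf (fun w => P1 w ∨ (P2 w ∨ P3 w)) := gf_ext Bar_iff
  have hd1 : ∀ w, P1 w → (P2 w ∨ P3 w) → False := by
    rintro w rfl (⟨-, t, ht, hne⟩ | ⟨-, t, ht⟩)
    · injection ht with h1 h2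
      injection h2 with h3 h4
      exact hne h4.symm
    · injection ht with h1 h2
      injection h2 with h3 h4
      exact Step.noConfusion h3
  have hd2 : ∀ w, P2 w → P3 w → False := by
    rintro w ⟨-, t, rfl, -⟩ ⟨-, t', ht'⟩
    injection ht' with h1 h2
    injection h2 with h3 h4
    exact Step.noConfusion h3
  refine hsplit.trans ?_
  rw [gf_union hd1 finP1 finP23, gf_union hd2 finP2 finP3, g1, g2, g3, add_assoc]

end BGaux

/-- the generating function `B(x,y)` of bargraphs satisfies
`x B² − (1 − x − y − xy) B + xy = 0`. -/
theorem BG_equation :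
    (MvPowerSeries.X (0 : Fin 2) : MvPowerSeries (Fin 2) ℚ) * BG ^ 2
      - (1 - MvPowerSeries.X (0 : Fin 2) - MvPowerSeries.X (1 : Fin 2)
          - MvPowerSeries.X (0 : Fin 2) * MvPowerSeries.X (1 : Fin 2)) * BG
      + MvPowerSeries.X (0 : Fin 2) * MvPowerSeries.X (1 : Fin 2) = 0 := by
  have hBG : BG = BGaux.gf IsBargraph := rfl
  set x : MvPowerSeries (Fin 2) ℚ := MvPowerSeries.X (0 : Fin 2) with hx
  set y : MvPowerSeries (Fin 2) ℚ := MvPowerSeries.X (1 : Fin 2) with hy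
  set B : MvPowerSeries (Fin 2) ℚ := BGaux.gf IsBargraph with hB
  set S : MvPowerSeries (Fin 2) ℚ := BGaux.gf BGaux.SL with hS
  set Uu : MvPowerSeries (Fin 2) ℚ := BGaux.gf BGaux.UL with hUu
  have eB : B = x * y + x * B + y * (B * S) := BGaux.gf_Bar_eq
  have eS : S = 1 + x * Uu := BGaux.gf_SL_eq
  have eU : Uu = 1 + x * Uu + B * S := BGaux.gf_UL_eq
  rw [hBG]
  have hconst : MvPowerSeries.constantCoeff (1 - x) = ((1 : ℚˣ) : ℚ) := by
    simp [hx]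
  have hinv : (1 - x) * MvPowerSeries.invOfUnit (1 - x) 1 = 1 :=
    MvPowerSeries.mul_invOfUnit (1 - x) 1 hconst
  set V : MvPowerSeries (Fin 2) ℚ := MvPowerSeries.invOfUnit (1 - x) 1 with hV
  have hmain : (1 - x) * (x * B ^ 2 - (1 - x - y - x * y) * B + x * y) = 0 := by
    linear_combination (-(1 - x - x * B)) * eB + (-(y * B * (1 - x))) * eS
      + (-(x * y * B)) * eU
  calc x * B ^ 2 - (1 - x - y - x * y) * B + x * y
      = (V * (1 - x)) * (x * B ^ 2 - (1 - x - y - x * y) * B + x * y) := by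
        rw [mul_comm V (1 - x), hinv, one_mul]
    _ = V * ((1 - x) * (x * B ^ 2 - (1 - x - y - x * y) * B + x * y)) := by ring
    _ = 0 := by rw [hmain, mul_zero]
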